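/- Let ℬ be an oplax covariant lens of path objects over a path object 𝒜. Assuming function extensionality, the flattening of ℬ onto 𝒜 is a univalent reflexive graph. -/

import Mathlib

/-- A reflexive graph: a type of vertices, a family of edge types, and
reflexivity data. -/
structure RxGraph where
  V : Type*
  Edge : V → V → Type*
  rx : ∀ x, Edge x x

/-- The fan of a vertex `x`: vertices equipped with an edge from `x`. -/
def RxGraph.Fan (A : RxGraph) (x : A.V) : Type _ :=
  Σ y, A.Edge x y

/-- The co-fan of a vertex `x`: vertices equipped with an edge toward `x`. -/
def RxGraph.CoFan (A : RxGraph) (x : A.V) : Type _ :=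
  Σ y, A.Edge y x

/-- A reflexive graph is univalent (a path object) when every fan is a
subsingleton. -/
def RxGraph.Univalent (A : RxGraph) : Prop :=
  ∀ x, Subsingleton (A.Fan x)

/-- A displayed reflexive graph over a reflexive graph `A`. -/
structure DispRxGraph (A : RxGraph) where
  V : A.V → Type*
  Edge : ∀ {x y : A.V}, A.Edge x y → V x → V y → Type*
  drx : ∀ (x : A.V) (u : V x), Edge (A.rx x) u u

/-- The component of a displayed reflexive graph at a vertex. -/
def DispRxGraph.component {A : RxGraph} (B : DispRxGraph A) (x : A.V) :
    RxGraph where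
  V := B.V x
  Edge := fun u v => B.Edge (A.rx x) u v
  rx := fun u => B.drx x u

/-- A displayed reflexive graph is univalent (a displayed path object) when
each of its components is univalent. -/
def DispRxGraph.Univalent {A : RxGraph} (B : DispRxGraph A) : Prop :=
  ∀ x, (B.component x).Univalent

/-- An oplax covariant lens over a reflexive graph `A`: a family of reflexive
graphs indexed in vertices, equipped with pushforward operations along edges
and an oplax unitor. -/
structure CovLens (A : RxGraph) where
  B : A.V → RxGraph.{u_3, u_4}
  push : ∀ {x y : A.V}, A.Edge x y → (B x).V → (B y).V
  pushRx : ∀ (x : A.V) (u : (B x).V), (B x).Edge (push (A.rx x) u) u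

/-- The display of an oplax covariant lens. -/
def CovLens.disp {A : RxGraph} (L : CovLens A) : DispRxGraph A where
  V := fun x => (L.B x).V
  Edge := fun {_ y} p u v => (L.B y).Edge (L.push p u) v
  drx := fun x u => L.pushRx x u

/-- The flattening of an oplax covariant lens onto its base. -/
def CovLens.flatten {A : RxGraph} (L : CovLens A) : RxGraph where
  V := A.V
  Edge := fun x y =>
    Σ p : A.Edge x y, Σ p' : (L.B x).V → (L.B y).V,
      ∀ u, (L.B y).Edge (L.push p u) (p' u)
  rx := fun x => ⟨A.rx x, fun u => u, fun u => L.pushRx x u⟩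

/-- Let `L` be an oplax covariant lens of path objects over a path object `A`.
Then the flattening of `L` onto `A` is univalent. (Function extensionality is
available ambiently in Lean.) -/
theorem flatten_univalent {A : RxGraph} (L : CovLens A)
    (hA : A.Univalent) (hB : ∀ x, (L.B x).Univalent) :
    L.flatten.Univalent := by
  intro x
  have key : ∀ f : L.flatten.Fan x,
      f = ⟨x, A.rx x, fun u => u, fun u => L.pushRx x u⟩ := by
    rintro ⟨y, p, p', h⟩
    obtain ⟨hy, hp⟩ := Sigma.mk.inj_iff.mp
      (@Subsingleton.elim _ (hA x) (⟨y, p⟩ : A.Fan x) ⟨x, A.rx x⟩)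
    subst hy
    have hp2 := eq_of_heq hp
    subst hp2
    have hpe : ∀ u, (⟨p' u, h u⟩ : (L.B y).Fan (L.push (A.rx y) u))
        = ⟨u, L.pushRx y u⟩ :=
      fun u => @Subsingleton.elim _ (hB y _) _ _
    have h1 : p' = fun u => u := funext fun u => congrArg Sigma.fst (hpe u)
    subst h1
    have h2 : h = fun u => L.pushRx y u :=
      funext fun u => eq_of_heq (Sigma.mk.inj_iff.mp (hpe u)).2
    subst h2
    rfl
  exact ⟨fun a b => (key a).trans (key b).symm⟩
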